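/- For every integer s ≥ 2 and every rational ρ ≥ 1/(s−1), there exists a strictly balanced s-uniform hypergraph with density exactly ρ. -/

import Mathlib

open scoped Classical

/-- A finite `s`-uniform hypergraph on a vertex set of natural numbers. -/
structure SHypergraph (s : ℕ) where
  V : Finset ℕ
  E : Finset (Finset ℕ)
  card_edges : ∀ e ∈ E, e.card = s
  edges_sub : ∀ e ∈ E, e ⊆ V

namespace SHypergraph

/-- The density `|E|/|V|` of a hypergraph. -/
noncomputable def density {s : ℕ} (G : SHypergraph s) : ℚ :=
  (G.E.card : ℚ) / (G.V.card : ℚ)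

/-- `G` is strictly balanced: every proper subhypergraph with at least one
vertex has strictly smaller density. -/
def StrictlyBalanced {s : ℕ} (G : SHypergraph s) : Prop :=
  G.V.Nonempty ∧ ∀ H : SHypergraph s, H.V ⊆ G.V → H.E ⊆ G.E → H.V.Nonempty →
    ¬(H.V = G.V ∧ H.E = G.E) → H.density < G.density

/-- The subhypergraph of `G` induced on the vertex set `S`. -/
def restrict {s : ℕ} (G : SHypergraph s) (S : Finset ℕ) : SHypergraph s where
  V := G.V ∩ S
  E := G.E.filter (fun e => e ⊆ S)
  card_edges := fun e he => G.card_edges e (Finset.mem_filter.mp he).1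
  edges_sub := fun e he a ha => Finset.mem_inter.mpr
    ⟨G.edges_sub e (Finset.mem_filter.mp he).1 ha, (Finset.mem_filter.mp he).2 ha⟩

/-- A cycle `(v 0, e 0, v 1, e 1, …, v (m-1), e (m-1), v m = v 0)` in `G`. -/
def IsCycle {s : ℕ} (G : SHypergraph s) (m : ℕ) (v : ℕ → ℕ) (e : ℕ → Finset ℕ) : Prop :=
  0 < m ∧ v m = v 0 ∧ e m = e 0 ∧
  (∀ i < m, e i ∈ G.E) ∧ (∀ i < m, v i ∈ G.V) ∧
  (∀ i < m, v i ≠ v (i + 1)) ∧ (∀ i < m, e i ≠ e (i + 1)) ∧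
  (∀ i < m, v i ∈ e i ∧ v (i + 1) ∈ e i)

/-- `G` is connected: it is nonempty and any two vertices are joined by a
chain of edges. -/
def Connected {s : ℕ} (G : SHypergraph s) : Prop :=
  G.V.Nonempty ∧ ∀ u ∈ G.V, ∀ w ∈ G.V,
    Relation.ReflTransGen (fun a b => ∃ e ∈ G.E, a ∈ e ∧ b ∈ e) u w

/-- A tree is a connected hypergraph without cycles. -/
def IsTree {s : ℕ} (G : SHypergraph s) : Prop :=
  G.Connected ∧ ¬ ∃ m v e, G.IsCycle m v e

/-- For a rooted pair: number of nonroot vertices minus `α` times the number of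
edges with at least one nonroot vertex, for roots `S` in the hypergraph `K`. -/
noncomputable def exVal {s : ℕ} (α : ℝ) (S : Finset ℕ) (K : SHypergraph s) : ℝ :=
  ((K.V \ S).card : ℝ) - ((K.E.filter (fun f => ¬ f ⊆ S)).card : ℝ) * α

/-- The rooted hypergraph `(S, K)` is dense: `v - e·α < 0`. -/
noncomputable def IsDense {s : ℕ} (α : ℝ) (S : Finset ℕ) (K : SHypergraph s) : Prop :=
  exVal α S K < 0

/-- The rooted hypergraph `(S, K)` is sparse: `v - e·α > 0`. -/
noncomputable def IsSparse {s : ℕ} (α : ℝ) (S : Finset ℕ) (K : SHypergraph s) : Prop :=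
  0 < exVal α S K

/-- `(R, K)` is rigid: every nailextension `(S, K)` with `R ⊆ S ⊊ V(K)` is dense. -/
noncomputable def Rigid {s : ℕ} (α : ℝ) (R : Finset ℕ) (K : SHypergraph s) : Prop :=
  ∀ S : Finset ℕ, R ⊆ S → S ⊂ K.V → IsDense α S K

/-- `(R, K)` is safe: every subextension `(R, K|_S)` with `R ⊊ S ⊆ V(K)` is sparse. -/
noncomputable def Safe {s : ℕ} (α : ℝ) (R : Finset ℕ) (K : SHypergraph s) : Prop :=
  ∀ S : Finset ℕ, R ⊂ S → S ⊆ K.V → IsSparse α R (K.restrict S)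

/-- `(R, K)` is minimally safe: safe, with no safe nailextension. -/
noncomputable def MinimallySafe {s : ℕ} (α : ℝ) (R : Finset ℕ) (K : SHypergraph s) : Prop :=
  Safe α R K ∧ ¬ ∃ S : Finset ℕ, R ⊂ S ∧ S ⊂ K.V ∧ Safe α S K

/-- A rigid `t`-chain `x 0 ⊆ x 1 ⊆ … ⊆ x k` in `G`: each step adds at most `t`
vertices and each `(x i, G|_{x (i+1)})` is rigid. -/
noncomputable def IsRigidChain {s : ℕ} (α : ℝ) (G : SHypergraph s) (t k : ℕ)
    (x : ℕ → Finset ℕ) : Prop :=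
  (∀ i < k, x i ⊆ x (i + 1)) ∧ (∀ i < k, (x (i + 1) \ x i).card ≤ t) ∧
  (∀ i ≤ k, x i ⊆ G.V) ∧ (∀ i < k, Rigid α (x i) (G.restrict (x (i + 1))))

/-- `C` is the `t`-closure of `X` in `G`: it is the endpoint of a rigid
`t`-chain starting at `X` and contains the endpoint of every such chain. -/
noncomputable def IsTClosure {s : ℕ} (α : ℝ) (G : SHypergraph s) (t : ℕ)
    (X C : Finset ℕ) : Prop :=
  (∃ k x, IsRigidChain α G t k x ∧ x 0 = X ∧ x k = C) ∧
  ∀ k' x', IsRigidChain α G t k' x' → x' 0 = X → x' k' ⊆ C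

end SHypergraph

open SHypergraph

/-- The possible edges of an `s`-uniform hypergraph on `Fin n`. -/
def edgeCandidates (s n : ℕ) : Finset (Finset (Fin n)) :=
  Finset.univ.filter (fun e => e.card = s)

/-- The probability of the event `A` under the binomial random `s`-uniform
hypergraph `G^s(n,p)`: each of the `C(n,s)` possible edges appears
independently with probability `p`. -/
noncomputable def hyperProb (s n : ℕ) (p : ℝ) (A : Set (Finset (Finset (Fin n)))) : ℝ :=
  ∑ E ∈ (edgeCandidates s n).powerset,
    if E ∈ A then p ^ E.card * (1 - p) ^ ((edgeCandidates s n).card - E.card) else 0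

/-- The `s`-uniform hypergraph on vertex set `{0,…,n-1}` determined by an
edge set over `Fin n`. -/
noncomputable def ofEdges (s n : ℕ) (E : Finset (Finset (Fin n))) : SHypergraph s where
  V := Finset.range n
  E := (E.filter (fun e => e.card = s)).image (fun e => e.image Fin.val)
  card_edges := by
    intro f hf
    simp only [Finset.mem_image, Finset.mem_filter] at hf
    obtain ⟨e, ⟨_, hcard⟩, rfl⟩ := hf
    rw [Finset.card_image_of_injective _ Fin.val_injective]
    exact hcard
  edges_sub := by
    intro f hf a ha
    simp only [Finset.mem_image, Finset.mem_filter] at hf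
    obtain ⟨e, _, rfl⟩ := hf
    simp only [Finset.mem_image] at ha
    obtain ⟨b, _, rfl⟩ := ha
    exact Finset.mem_range.mpr b.isLt


open scoped Classical

namespace Necklace

variable (s m n : ℕ)

def lo (i : ℕ) : ℕ := i * n / m

def grp (i : ℕ) : Finset ℕ := (Finset.Ico (i+1) m).filter (fun i' => lo m n i' = lo m n i)

def step (i : ℕ) : ℕ := (grp m n i).card + 1

def edg (i : ℕ) : Finset ℕ := (Finset.range s).image (fun t => (lo m n i + t * step m n i) % n)

def lam (i j : ℕ) : ℕ :=
  ((Finset.range (m*n)).filter (fun x => x / n = i ∧ x / m = j)).card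

variable {s m n}

section basic

lemma lo_le {i i' : ℕ} (h : i ≤ i') : lo m n i ≤ lo m n i' :=
  Nat.div_le_div_right (Nat.mul_le_mul_right _ h)

lemma lo_lt_n (hn : 0 < n) (hm : 0 < m) {i : ℕ} (hi : i < m) : lo m n i < n := by
  unfold lo
  rw [Nat.div_lt_iff_lt_mul hm]
  calc i * n < m * n := by exact Nat.mul_lt_mul_of_lt_of_le hi le_rfl hn
    _ ≤ n * m := by rw [Nat.mul_comm]

lemma lo_mul_le (i : ℕ) : lo m n i * m ≤ i * n := by
  simpa [lo] using Nat.div_mul_le_self (i*n) m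

lemma mul_lt_lo (hm : 0 < m) (i : ℕ) : i * n < (lo m n i + 1) * m := by
  have h : i * n / m < lo m n i + 1 := Nat.lt_succ_self _
  have := (Nat.div_lt_iff_lt_mul hm).mp h
  calc i * n < (lo m n i + 1) * m := by rw [Nat.mul_comm] at this ⊢; omega

lemma step_pos (i : ℕ) : 0 < step m n i := Nat.succ_pos _

lemma step_le (hm : 0 < m) (hn : 0 < n) (i : ℕ) : step m n i ≤ m / n + 1 := by
  have hsub : grp m n i ⊆ Finset.Ico (i+1) (i + m/n + 1) := by
    intro i' hi'
    simp only [grp, Finset.mem_filter, Finset.mem_Ico] at hi'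
    obtain ⟨⟨h1, h2⟩, h3⟩ := hi'
    have hvm : lo m n i * m ≤ i * n := lo_mul_le i
    have hvm' : i' * n < lo m n i * m + m := by
      have := mul_lt_lo (n := n) hm i'
      rw [h3, add_mul, one_mul] at this; omega
    have hdiff : (i' - i) * n < m := by
      rw [Nat.sub_mul]; omega
    have : i' - i ≤ m / n := by
      rw [Nat.le_div_iff_mul_le hn]; omega
    simp only [Finset.mem_Ico]; omega
  have h := Finset.card_le_card hsub
  rw [Nat.card_Ico] at h
  unfold step
  generalize hD : m/n = D at *
  omega

end basic

end Necklace

namespace Necklace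

section edges

variable {s m n : ℕ}

lemma tstep_lt (hs : 2 ≤ s) (hm : 0 < m) (hn : 0 < n)
    (hbig : 2*(s-1)*(m/n + 1) < n) {t i : ℕ} (ht : t < s) :
    2 * (t * step m n i) < n := by
  have h1 : step m n i ≤ m/n + 1 := step_le hm hn i
  have h2 : t ≤ s - 1 := by omega
  have : t * step m n i ≤ (s-1) * (m/n+1) := Nat.mul_le_mul h2 h1
  rw [mul_assoc] at hbig
  generalize hD : m/n = D at *
  omega

lemma card_edg (hs : 2 ≤ s) (hm : 0 < m) (hn : 0 < n)
    (hbig : 2*(s-1)*(m/n + 1) < n) (i : ℕ) : (edg s m n i).card = s := by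
  unfold edg
  rw [Finset.card_image_of_injOn, Finset.card_range]
  intro t1 h1 t2 h2 heq
  simp only [Finset.coe_range, Set.mem_Iio] at h1 h2
  -- wlog via symmetry
  rcases le_total t1 t2 with hle | hle
  · by_contra hne
    have hlt : t1 < t2 := by omega
    have hstep := step_pos (m := m) (n := n) i
    have hd : (t2 - t1) * step m n i < n := by
      have := tstep_lt hs hm hn hbig (i := i) (t := t2 - t1) (by omega)
      omega
    have hmod : (lo m n i + t1 * step m n i) ≡ (lo m n i + t2 * step m n i) [MOD n] := by
      unfold Nat.ModEq; exact heq
    have hdvd : n ∣ (lo m n i + t2 * step m n i) - (lo m n i + t1 * step m n i) := by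
      rw [← Nat.modEq_iff_dvd' (by nlinarith)]
      exact hmod
    have hsub : (lo m n i + t2 * step m n i) - (lo m n i + t1 * step m n i)
        = (t2 - t1) * step m n i := by
      rw [Nat.sub_mul]; omega
    rw [hsub] at hdvd
    have := Nat.eq_zero_of_dvd_of_lt hdvd hd
    · have : t2 - t1 = 0 := by
        rcases Nat.mul_eq_zero.mp this with h | h
        · exact h
        · omega
      omega
  · by_contra hne
    have hlt : t2 < t1 := by omega
    have hstep := step_pos (m := m) (n := n) i
    have hd : (t1 - t2) * step m n i < n := by
      have := tstep_lt hs hm hn hbig (i := i) (t := t1 - t2) (by omega)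
      omega
    have hmod : (lo m n i + t2 * step m n i) ≡ (lo m n i + t1 * step m n i) [MOD n] := by
      unfold Nat.ModEq; exact heq.symm
    have hdvd : n ∣ (lo m n i + t1 * step m n i) - (lo m n i + t2 * step m n i) := by
      rw [← Nat.modEq_iff_dvd' (by nlinarith)]
      exact hmod
    have hsub : (lo m n i + t1 * step m n i) - (lo m n i + t2 * step m n i)
        = (t1 - t2) * step m n i := by
      rw [Nat.sub_mul]; omega
    rw [hsub] at hdvd
    have := Nat.eq_zero_of_dvd_of_lt hdvd hd
    have : t1 - t2 = 0 := by
      rcases Nat.mul_eq_zero.mp this with h | h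
      · exact h
      · omega
    omega

lemma edg_sub_range (hn : 0 < n) (i : ℕ) : edg s m n i ⊆ Finset.range n := by
  intro y hy
  simp only [edg, Finset.mem_image] at hy
  obtain ⟨t, _, rfl⟩ := hy
  exact Finset.mem_range.mpr (Nat.mod_lt _ hn)

lemma lo_mem_edg (hs : 2 ≤ s) (hm : 0 < m) (hn : 0 < n) {i : ℕ} (hi : i < m) :
    lo m n i ∈ edg s m n i := by
  simp only [edg, Finset.mem_image]
  exact ⟨0, Finset.mem_range.mpr (by omega), by simp [Nat.mod_eq_of_lt (lo_lt_n hn hm hi)]⟩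

end edges

end Necklace

namespace Necklace

section distinct

variable {s m n : ℕ}

lemma mem_edg_iff {y i : ℕ} :
    y ∈ edg s m n i ↔ ∃ t, t < s ∧ y = (lo m n i + t * step m n i) % n := by
  simp only [edg, Finset.mem_image, Finset.mem_range]
  constructor
  · rintro ⟨t, ht, rfl⟩; exact ⟨t, ht, rfl⟩
  · rintro ⟨t, ht, rfl⟩; exact ⟨t, ht, rfl⟩

lemma modeq_eq_of_lt {a b : ℕ} (h : a ≡ b [MOD n]) (ha : a < n) (hb : b < n) : a = b := by
  have := h
  unfold Nat.ModEq at this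
  rwa [Nat.mod_eq_of_lt ha, Nat.mod_eq_of_lt hb] at this

lemma lo_eq_of_edg_eq (hs : 2 ≤ s) (hm : 0 < m) (hn : 0 < n)
    (hbig : 2*(s-1)*(m/n + 1) < n) {i i' : ℕ} (hi : i < m) (hi' : i' < m)
    (heq : edg s m n i = edg s m n i') : lo m n i = lo m n i' := by
  have h1 : lo m n i' ∈ edg s m n i := by rw [heq]; exact lo_mem_edg hs hm hn hi'
  have h2 : lo m n i ∈ edg s m n i' := by rw [← heq]; exact lo_mem_edg hs hm hn hi
  obtain ⟨t, ht, hA⟩ := mem_edg_iff.mp h1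
  obtain ⟨t', ht', hB⟩ := mem_edg_iff.mp h2
  set A := t * step m n i with hAdef
  set B := t' * step m n i' with hBdef
  have hAn : 2 * A < n := tstep_lt hs hm hn hbig ht
  have hBn : 2 * B < n := tstep_lt hs hm hn hbig ht'
  have hlo : lo m n i < n := lo_lt_n hn hm hi
  have hkey : lo m n i = (lo m n i + (A + B)) % n := by
    calc lo m n i = (lo m n i' + B) % n := hB
      _ = ((lo m n i + A) % n + B) % n := by rw [← hA]
      _ = (lo m n i + A + B) % n := Nat.mod_add_mod _ _ _
      _ = (lo m n i + (A + B)) % n := by ring_nf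
  have hmod : (lo m n i + 0) ≡ (lo m n i + (A + B)) [MOD n] := by
    unfold Nat.ModEq
    rw [Nat.add_zero, Nat.mod_eq_of_lt hlo]
    exact hkey
  have : 0 ≡ A + B [MOD n] := Nat.ModEq.add_left_cancel' _ hmod
  have hz : A + B = 0 := by
    have := (modeq_eq_of_lt this hn (by omega)).symm
    omega
  have : lo m n i' = (lo m n i + A) % n := hA
  rw [show A = 0 by omega, Nat.add_zero, Nat.mod_eq_of_lt hlo] at this
  omega

lemma step_eq_of_edg_eq (hs : 2 ≤ s) (hm : 0 < m) (hn : 0 < n)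
    (hbig : 2*(s-1)*(m/n + 1) < n) {i i' : ℕ} (hi : i < m) (hi' : i' < m)
    (heq : edg s m n i = edg s m n i') : step m n i = step m n i' := by
  have hlo : lo m n i = lo m n i' := lo_eq_of_edg_eq hs hm hn hbig hi hi' heq
  have key : ∀ j j' : ℕ, j < m → j' < m → lo m n j = lo m n j' →
      edg s m n j = edg s m n j' → step m n j' ≤ step m n j := by
    intro j j' hj hj' hloeq heq'
    have h1 : (lo m n j + 1 * step m n j) % n ∈ edg s m n j' := by
      rw [← heq']
      exact mem_edg_iff.mpr ⟨1, by omega, rfl⟩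
    obtain ⟨t', ht', hB⟩ := mem_edg_iff.mp h1
    rw [hloeq] at hB
    have hmod : (lo m n j' + 1 * step m n j) ≡ (lo m n j' + t' * step m n j') [MOD n] := by
      unfold Nat.ModEq
      rw [hB]
    have hmod2 : 1 * step m n j ≡ t' * step m n j' [MOD n] :=
      Nat.ModEq.add_left_cancel' _ hmod
    have hAn : 2 * (1 * step m n j) < n := tstep_lt hs hm hn hbig (by omega)
    have hBn : 2 * (t' * step m n j') < n := tstep_lt hs hm hn hbig ht'
    have heqq : 1 * step m n j = t' * step m n j' :=
      modeq_eq_of_lt hmod2 (by omega) (by omega)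
    have hspos := step_pos (m := m) (n := n) j
    have hspos' := step_pos (m := m) (n := n) j'
    have ht'pos : 1 ≤ t' := by
      by_contra h
      have : t' = 0 := by omega
      rw [this] at heqq; simp at heqq; omega
    calc step m n j' = 1 * step m n j' := (one_mul _).symm
      _ ≤ t' * step m n j' := Nat.mul_le_mul_right _ ht'pos
      _ = 1 * step m n j := heqq.symm
      _ = step m n j := one_mul _
  exact le_antisymm (key i' i hi' hi hlo.symm heq.symm) (key i i' hi hi' hlo heq)

lemma step_lt_of_lt (hm : 0 < m) {i i' : ℕ} (hlt : i < i') (hi' : i' < m)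
    (hloeq : lo m n i = lo m n i') : step m n i' < step m n i := by
  have hss : grp m n i' ⊂ grp m n i := by
    constructor
    · intro x hx
      simp only [grp, Finset.mem_filter, Finset.mem_Ico] at hx ⊢
      refine ⟨⟨by omega, hx.1.2⟩, by rw [hx.2, hloeq]⟩
    · intro hsub
      have : i' ∈ grp m n i := by
        simp only [grp, Finset.mem_filter, Finset.mem_Ico]
        exact ⟨⟨by omega, hi'⟩, hloeq.symm⟩
      have := hsub this
      simp only [grp, Finset.mem_filter, Finset.mem_Ico] at this
      omega
  have := Finset.card_lt_card hss
  unfold step; omega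

lemma edg_injOn (hs : 2 ≤ s) (hm : 0 < m) (hn : 0 < n)
    (hbig : 2*(s-1)*(m/n + 1) < n) {i i' : ℕ} (hi : i < m) (hi' : i' < m)
    (heq : edg s m n i = edg s m n i') : i = i' := by
  have hlo : lo m n i = lo m n i' := lo_eq_of_edg_eq hs hm hn hbig hi hi' heq
  have hstep : step m n i = step m n i' := step_eq_of_edg_eq hs hm hn hbig hi hi' heq
  rcases lt_trichotomy i i' with h | h | h
  · have := step_lt_of_lt hm h hi' hlo; omega
  · exact h
  · have := step_lt_of_lt hm h hi hlo.symm; omega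

end distinct

end Necklace

namespace Necklace

section lamsec

variable {s m n : ℕ}

lemma lt_div_mul_add {x : ℕ} (hn : 0 < n) : x < x/n*n + n := by
  have h1 := Nat.div_add_mod x n
  have h2 := Nat.mod_lt x hn
  rw [Nat.mul_comm] at h1
  omega

lemma div_eq_of {i x : ℕ} (hn : 0 < n) (h1 : i*n ≤ x) (h2 : x < i*n + n) : x/n = i := by
  have hge : i ≤ x / n := by rw [Nat.le_div_iff_mul_le hn]; omega
  have hlt : x / n < i + 1 := by
    rw [Nat.div_lt_iff_lt_mul hn]
    have : (i+1)*n = i*n + n := by ring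
    omega
  omega

lemma lam_ne_iff {i j : ℕ} :
    lam m n i j ≠ 0 ↔ ∃ x, x < m*n ∧ x / n = i ∧ x / m = j := by
  unfold lam
  rw [Finset.card_ne_zero, Finset.filter_nonempty_iff]
  constructor
  · rintro ⟨x, hx, h⟩
    exact ⟨x, Finset.mem_range.mp hx, h⟩
  · rintro ⟨x, h1, h⟩
    exact ⟨x, Finset.mem_range.mpr h1, h⟩

lemma filter_div_eq_Ico (hn : 0 < n) {i : ℕ} (hi : i < m) :
    (Finset.range (m*n)).filter (fun x => x / n = i) = Finset.Ico (i*n) (i*n + n) := by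
  ext x
  simp only [Finset.mem_filter, Finset.mem_range, Finset.mem_Ico]
  constructor
  · rintro ⟨hx, rfl⟩
    exact ⟨Nat.div_mul_le_self _ _, lt_div_mul_add hn⟩
  · rintro ⟨h1, h2⟩
    have hmn : (i+1)*n ≤ m*n := Nat.mul_le_mul_right _ (by omega)
    have hin : (i+1)*n = i*n + n := by ring
    exact ⟨by omega, div_eq_of hn h1 h2⟩

lemma filter_div_eq_Ico' (hm : 0 < m) {j : ℕ} (hj : j < n) :
    (Finset.range (m*n)).filter (fun x => x / m = j) = Finset.Ico (j*m) (j*m + m) := by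
  have := filter_div_eq_Ico (m := n) (n := m) hm hj
  rw [Nat.mul_comm n m] at this
  exact this

lemma row_sum (hm : 0 < m) (hn : 0 < n) {i : ℕ} (hi : i < m) :
    ∑ j ∈ Finset.range n, lam m n i j = n := by
  set W := (Finset.range (m*n)).filter (fun x => x / n = i) with hWdef
  have hmem : ∀ x ∈ W, x / m ∈ Finset.range n := by
    intro x hx
    simp only [hWdef, Finset.mem_filter, Finset.mem_range] at hx
    simp only [Finset.mem_range]
    rw [Nat.div_lt_iff_lt_mul hm]
    have : n * m = m * n := Nat.mul_comm n m
    omega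
  calc ∑ j ∈ Finset.range n, lam m n i j
      = ∑ j ∈ Finset.range n, (W.filter (fun x => x / m = j)).card := by
        apply Finset.sum_congr rfl
        intro j _
        unfold lam
        congr 1
        rw [hWdef, Finset.filter_filter]
    _ = W.card := (Finset.card_eq_sum_card_fiberwise hmem).symm
    _ = n := by rw [hWdef, filter_div_eq_Ico hn hi, Nat.card_Ico]; omega

lemma col_sum (hm : 0 < m) (hn : 0 < n) {j : ℕ} (hj : j < n) :
    ∑ i ∈ Finset.range m, lam m n i j = m := by
  set W := (Finset.range (m*n)).filter (fun x => x / m = j) with hWdef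
  have hmem : ∀ x ∈ W, x / n ∈ Finset.range m := by
    intro x hx
    simp only [hWdef, Finset.mem_filter, Finset.mem_range] at hx
    simp only [Finset.mem_range]
    rw [Nat.div_lt_iff_lt_mul hn]
    have : n * m = m * n := Nat.mul_comm n m
    omega
  calc ∑ i ∈ Finset.range m, lam m n i j
      = ∑ i ∈ Finset.range m, (W.filter (fun x => x / n = i)).card := by
        apply Finset.sum_congr rfl
        intro i _
        unfold lam
        congr 1
        rw [hWdef, Finset.filter_filter]
        ext x
        simp only [Finset.mem_filter]
        tauto
    _ = W.card := (Finset.card_eq_sum_card_fiberwise hmem).symm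
    _ = m := by rw [hWdef, filter_div_eq_Ico' hm hj, Nat.card_Ico]; omega

end lamsec

end Necklace

namespace Necklace

section structure_lemmas

variable {s m n : ℕ}

/-- If `λ i j ≠ 0` then `j` is one of the vertices of edge `i`. -/
lemma supp_sub_edg (hs : 2 ≤ s) (hm : 0 < m) (hn : 0 < n) (hnm : n ≤ (s-1)*m)
    {i j : ℕ} (hi : i < m) (hne : lam m n i j ≠ 0) : j ∈ edg s m n i := by
  obtain ⟨x, hx, hxi, hxj⟩ := lam_ne_iff.mp hne
  have hinx : i * n ≤ x := by rw [← hxi]; exact Nat.div_mul_le_self _ _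
  have hxin : x < i * n + n := by rw [← hxi]; exact lt_div_mul_add hn
  have hloj : lo m n i ≤ j := by
    rw [← hxj]
    exact Nat.div_le_div_right hinx
  have hlom : lo m n i * m ≤ i * n := lo_mul_le i
  have hlom' : i * n < lo m n i * m + m := by
    have := mul_lt_lo (n := n) hm i
    rw [add_mul, one_mul] at this
    omega
  have hjn : j < n := by
    rw [← hxj, Nat.div_lt_iff_lt_mul hm]
    have h1 : (i+1) * n ≤ m * n := Nat.mul_le_mul_right _ (by omega)
    have h2 : (i+1) * n = i*n + n := by ring
    have h3 : n * m = m * n := Nat.mul_comm n m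
    omega
  have hjhi : j < lo m n i + s := by
    rw [← hxj, Nat.div_lt_iff_lt_mul hm]
    have h1 : (s-1)*m ≥ n := hnm
    have hsplit : (s-1)*m + m = s*m := by
      have hh : s - 1 + 1 = s := by omega
      calc (s-1)*m + m = ((s-1)+1)*m := by ring
        _ = s*m := by rw [hh]
    have h2 : (lo m n i + s) * m = lo m n i * m + s * m := by ring
    omega
  rcases Nat.eq_or_lt_of_le (step_pos (m := m) (n := n) i) with hst | hst
  · -- step = 1
    refine mem_edg_iff.mpr ⟨j - lo m n i, by omega, ?_⟩
    rw [← hst, Nat.mul_one]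
    have : lo m n i + (j - lo m n i) = j := by omega
    rw [this, Nat.mod_eq_of_lt hjn]
  · -- step ≥ 2 : there is a later window in the same group
    have hgrp : (grp m n i).Nonempty := by
      rw [← Finset.card_pos]
      unfold step at hst
      omega
    obtain ⟨i'', hi''⟩ := hgrp
    simp only [grp, Finset.mem_filter, Finset.mem_Ico] at hi''
    obtain ⟨⟨hgt, hltm⟩, hloeq⟩ := hi''
    have h1 : i'' * n < lo m n i * m + m := by
      have := mul_lt_lo (n := n) hm i''
      rw [add_mul, one_mul, hloeq] at this
      omega
    have h2 : (i+1) * n ≤ i'' * n := Nat.mul_le_mul_right _ hgt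
    have h3 : (i+1) * n = i * n + n := by ring
    have hxlo : x / m = lo m n i := by
      apply div_eq_of hm
      · omega
      · omega
    have : j = lo m n i := by rw [← hxj, hxlo]
    rw [this]
    exact lo_mem_edg hs hm hn hi

/-- The successor property : every vertex `j` receives weight from an edge
containing `(j+1) % n`. -/
lemma succ_lemma (hs : 2 ≤ s) (hm : 0 < m) (hn : 0 < n) (hnm : n ≤ (s-1)*m)
    {j : ℕ} (hj : j < n) :
    ∃ i, i < m ∧ lam m n i j ≠ 0 ∧ (j+1) % n ∈ edg s m n i := by
  set x := (j+1)*m - 1 with hxdef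
  have hxm : j*m ≤ x ∧ x < j*m + m := by
    constructor <;> [skip; skip] <;>
    · have : (j+1)*m = j*m + m := by ring
      omega
  have hxj : x / m = j := div_eq_of hm hxm.1 hxm.2
  have hxmn : x < m * n := by
    have h1 : (j+1) * m ≤ n * m := Nat.mul_le_mul_right _ (by omega)
    have h2 : n * m = m * n := Nat.mul_comm n m
    have h3 : (j+1)*m = j*m+m := by ring
    omega
  set i := x / n with hidef
  have him : i < m := by
    rw [hidef, Nat.div_lt_iff_lt_mul hn]
    have : n * m = m * n := Nat.mul_comm n m
    omega
  have hlam : lam m n i j ≠ 0 := lam_ne_iff.mpr ⟨x, hxmn, rfl, hxj⟩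
  have hinx : i * n ≤ x := by rw [hidef]; exact Nat.div_mul_le_self _ _
  have hxin : x < i * n + n := by rw [hidef]; exact lt_div_mul_add hn
  have hloj : lo m n i ≤ j := by
    rw [← hxj]
    exact Nat.div_le_div_right hinx
  have hlom : lo m n i * m ≤ i * n := lo_mul_le i
  have hlom' : i * n < lo m n i * m + m := by
    have := mul_lt_lo (n := n) hm i
    rw [add_mul, one_mul] at this
    omega
  -- j + 1 < lo i + s
  have hjs : j + 1 < lo m n i + s := by
    have h1 : (j+1) * m = x + 1 := by
      have : (j+1)*m = j*m+m := by ring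
      omega
    have h2 : x + 1 ≤ i*n + n := by omega
    have hsplit : (s-1)*m + m = s*m := by
      have hh : s - 1 + 1 = s := by omega
      calc (s-1)*m + m = ((s-1)+1)*m := by ring
        _ = s*m := by rw [hh]
    have h3 : (lo m n i + s) * m = lo m n i * m + s * m := by ring
    have h4 : (j+1) * m < (lo m n i + s) * m := by omega
    exact lt_of_mul_lt_mul_right h4 (by omega)
  -- step i = 1
  have hstep : step m n i = 1 := by
    by_contra hne
    have hst : 2 ≤ step m n i := by
      have := step_pos (m := m) (n := n) i
      omega
    have hgrp : (grp m n i).Nonempty := by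
      rw [← Finset.card_pos]
      unfold step at hst
      omega
    obtain ⟨i'', hi''⟩ := hgrp
    simp only [grp, Finset.mem_filter, Finset.mem_Ico] at hi''
    obtain ⟨⟨hgt, hltm⟩, hloeq⟩ := hi''
    have h1 : i'' * n < lo m n i * m + m := by
      have := mul_lt_lo (n := n) hm i''
      rw [add_mul, one_mul, hloeq] at this
      omega
    have h2 : (i+1) * n ≤ i'' * n := Nat.mul_le_mul_right _ hgt
    have h3 : (i+1) * n = i * n + n := by ring
    have h4 : (lo m n i + 1) * m ≤ (j+1) * m :=
      Nat.mul_le_mul_right _ (by omega)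
    have h5 : (j+1) * m = x + 1 := by
      have : (j+1)*m = j*m+m := by ring
      omega
    have h6 : (lo m n i + 1) * m = lo m n i * m + m := by ring
    omega
  refine ⟨i, him, hlam, ?_⟩
  refine mem_edg_iff.mpr ⟨j + 1 - lo m n i, by omega, ?_⟩
  rw [hstep, Nat.mul_one]
  congr 1
  omega

end structure_lemmas

end Necklace

namespace Necklace

section mainsec

variable {s m n : ℕ}

lemma cyc_closure {U : Finset ℕ} (hU : U ⊆ Finset.range n) (hne : U.Nonempty)
    (hcl : ∀ j ∈ U, (j+1) % n ∈ U) : U = Finset.range n := by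
  obtain ⟨j₀, hj₀⟩ := hne
  have hj₀n : j₀ < n := Finset.mem_range.mp (hU hj₀)
  have key : ∀ t, (j₀ + t) % n ∈ U := by
    intro t
    induction t with
    | zero => simpa [Nat.mod_eq_of_lt hj₀n] using hj₀
    | succ t ih =>
      have := hcl _ ih
      rwa [Nat.mod_add_mod, Nat.add_assoc] at this
  apply Finset.Subset.antisymm hU
  intro j hj
  have hjn : j < n := Finset.mem_range.mp hj
  have := key (n - j₀ + j)
  have heq : j₀ + (n - j₀ + j) = n + j := by omega
  rw [heq, Nat.add_mod_left, Nat.mod_eq_of_lt hjn] at this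
  exact this

lemma main_count (hs : 2 ≤ s) (hm : 0 < m) (hn : 0 < n) (hnm : n ≤ (s-1)*m)
    {U F : Finset ℕ} (hU : U ⊆ Finset.range n) (hF : F ⊆ Finset.range m)
    (hFE : ∀ i ∈ F, edg s m n i ⊆ U) (hUne : U.Nonempty)
    (hproper : ¬(U = Finset.range n ∧ F = Finset.range m)) :
    n * F.card < m * U.card := by
  have hrowU : ∀ i ∈ F, ∑ j ∈ U, lam m n i j = n := by
    intro i hi
    have hi' : i < m := Finset.mem_range.mp (hF hi)
    have := Finset.sum_subset hU (f := fun j => lam m n i j) ?_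
    · rw [this]; exact row_sum hm hn hi'
    · intro j _ hjU
      by_contra hne
      exact hjU (hFE i hi (supp_sub_edg hs hm hn hnm hi' hne))
  have hS1 : ∑ i ∈ F, ∑ j ∈ U, lam m n i j = n * F.card := by
    rw [Finset.sum_congr rfl hrowU, Finset.sum_const, smul_eq_mul, Nat.mul_comm]
  have hS2 : ∑ i ∈ Finset.range m, ∑ j ∈ U, lam m n i j = m * U.card := by
    rw [Finset.sum_comm]
    have : ∀ j ∈ U, ∑ i ∈ Finset.range m, lam m n i j = m := by
      intro j hj
      exact col_sum hm hn (Finset.mem_range.mp (hU hj))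
    rw [Finset.sum_congr rfl this, Finset.sum_const, smul_eq_mul, Nat.mul_comm]
  have hle : n * F.card ≤ m * U.card := by
    rw [← hS1, ← hS2]
    exact Finset.sum_le_sum_of_subset hF
  rcases Nat.lt_or_ge (n * F.card) (m * U.card) with h | h
  · exact h
  exfalso
  have heq : n * F.card = m * U.card := by omega
  have hsplit : ∑ i ∈ Finset.range m \ F, ∑ j ∈ U, lam m n i j
      + ∑ i ∈ F, ∑ j ∈ U, lam m n i j = ∑ i ∈ Finset.range m, ∑ j ∈ U, lam m n i j :=
    Finset.sum_sdiff hF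
  have hzero : ∑ i ∈ Finset.range m \ F, ∑ j ∈ U, lam m n i j = 0 := by omega
  have hz1 : ∀ i ∈ Finset.range m \ F, ∑ j ∈ U, lam m n i j = 0 := by
    intro i hi
    exact (Finset.sum_eq_zero_iff.mp hzero) i hi
  have hcl : ∀ j ∈ U, (j+1) % n ∈ U := by
    intro j hj
    have hjn : j < n := Finset.mem_range.mp (hU hj)
    obtain ⟨i, him, hlam, hmem⟩ := succ_lemma hs hm hn hnm hjn
    have hiF : i ∈ F := by
      by_contra hiF
      have : i ∈ Finset.range m \ F := by
        simp only [Finset.mem_sdiff, Finset.mem_range]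
        exact ⟨him, hiF⟩
      have := (Finset.sum_eq_zero_iff.mp (hz1 i this)) j hj
      exact hlam this
    exact hFE i hiF hmem
  have hUeq : U = Finset.range n := cyc_closure hU hUne hcl
  have hUcard : U.card = n := by rw [hUeq, Finset.card_range]
  have hFcard : F.card = m := by
    have : n * F.card = n * m := by rw [heq, hUcard]; ring
    exact Nat.eq_of_mul_eq_mul_left hn this
  have hFeq : F = Finset.range m := by
    apply Finset.eq_of_subset_of_card_le hF
    rw [Finset.card_range, hFcard]
  exact hproper ⟨hUeq, hFeq⟩

end mainsec

end Necklace


namespace Necklace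

/-- The necklace hypergraph. -/
noncomputable def graph (s m n : ℕ) (hs : 2 ≤ s) (hm : 0 < m) (hn : 0 < n)
    (hbig : 2*(s-1)*(m/n + 1) < n) : SHypergraph s where
  V := Finset.range n
  E := (Finset.range m).image (edg s m n)
  card_edges := by
    intro e he
    obtain ⟨i, _, rfl⟩ := Finset.mem_image.mp he
    exact card_edg hs hm hn hbig i
  edges_sub := by
    intro e he
    obtain ⟨i, _, rfl⟩ := Finset.mem_image.mp he
    exact edg_sub_range hn i

variable {s m n : ℕ}

lemma graph_E_card (hs : 2 ≤ s) (hm : 0 < m) (hn : 0 < n)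
    (hbig : 2*(s-1)*(m/n + 1) < n) :
    (graph s m n hs hm hn hbig).E.card = m := by
  show ((Finset.range m).image (edg s m n)).card = m
  rw [Finset.card_image_of_injOn, Finset.card_range]
  intro i hi i' hi' heq
  simp only [Finset.coe_range, Set.mem_Iio] at hi hi'
  exact edg_injOn hs hm hn hbig hi hi' heq

theorem graph_balanced (hs : 2 ≤ s) (hm : 0 < m) (hn : 0 < n) (hnm : n ≤ (s-1)*m)
    (hbig : 2*(s-1)*(m/n + 1) < n) :
    (graph s m n hs hm hn hbig).StrictlyBalanced := by
  constructor
  · exact ⟨0, Finset.mem_range.mpr hn⟩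
  intro H hV hE hVne hproper
  set U := H.V with hUdef
  set F := (Finset.range m).filter (fun i => edg s m n i ∈ H.E) with hFdef
  have hGE : (graph s m n hs hm hn hbig).E = (Finset.range m).image (edg s m n) := rfl
  have hGV : (graph s m n hs hm hn hbig).V = Finset.range n := rfl
  have hHE : H.E = F.image (edg s m n) := by
    ext e
    constructor
    · intro he
      have := hE he
      rw [hGE] at this
      obtain ⟨i, hi, rfl⟩ := Finset.mem_image.mp this
      exact Finset.mem_image.mpr ⟨i, Finset.mem_filter.mpr ⟨hi, he⟩, rfl⟩
    · intro he
      obtain ⟨i, hi, rfl⟩ := Finset.mem_image.mp he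
      exact (Finset.mem_filter.mp hi).2
  have hinjF : Set.InjOn (edg s m n) ↑F := by
    intro i hi i' hi' heq
    simp only [hFdef, Finset.coe_filter, Set.mem_setOf_eq, Finset.mem_range] at hi hi'
    exact edg_injOn hs hm hn hbig hi.1 hi'.1 heq
  have hFcard : H.E.card = F.card := by
    rw [hHE, Finset.card_image_of_injOn hinjF]
  have hFsub : F ⊆ Finset.range m := Finset.filter_subset _ _
  have hFE : ∀ i ∈ F, edg s m n i ⊆ U := by
    intro i hi
    exact H.edges_sub _ (Finset.mem_filter.mp hi).2
  have hUsub : U ⊆ Finset.range n := by rw [← hGV]; exact hV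
  have hproper' : ¬(U = Finset.range n ∧ F = Finset.range m) := by
    rintro ⟨h1, h2⟩
    apply hproper
    constructor
    · rw [hGV, ← h1]
    · rw [hGE, hHE, h2]
  have hmain : n * F.card < m * U.card :=
    main_count hs hm hn hnm hUsub hFsub hFE hVne hproper'
  -- now compare densities
  have hUpos : 0 < U.card := Finset.card_pos.mpr hVne
  unfold SHypergraph.density
  rw [graph_E_card hs hm hn hbig, hGV, Finset.card_range, hFcard]
  rw [div_lt_div_iff₀ (by exact_mod_cast hUpos) (by exact_mod_cast hn)]
  have : (F.card : ℚ) * n < (m : ℚ) * U.card := by exact_mod_cast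
    (by calc F.card * n = n * F.card := Nat.mul_comm _ _
          _ < m * U.card := hmain)
  linarith

end Necklace


/-- For every integer `s ≥ 2` and every rational `ρ ≥ 1/(s-1)`,
there exists a strictly balanced `s`-uniform hypergraph with density `ρ`. -/
theorem stmt1 (s : ℕ) (hs : 2 ≤ s) (ρ : ℚ) (hρ : 1 / ((s : ℚ) - 1) ≤ ρ) :
    ∃ G : SHypergraph s, G.StrictlyBalanced ∧ G.density = ρ := by
  have hs1 : (1:ℚ) ≤ (s:ℚ) - 1 := by
    have : (2:ℚ) ≤ (s:ℚ) := by exact_mod_cast hs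
    linarith
  have hρpos : 0 < ρ := lt_of_lt_of_le (by positivity) hρ
  set a := ρ.num.toNat with hadef
  set b := ρ.den with hbdef
  have hanum : (ρ.num : ℚ) = (a : ℚ) := by
    have := Int.toNat_of_nonneg (le_of_lt (Rat.num_pos.mpr hρpos))
    rw [hadef]
    exact_mod_cast this.symm
  have hapos : 0 < a := by
    have := Rat.num_pos.mpr hρpos
    omega
  have hbpos : 0 < b := ρ.pos
  have hρab : ρ = (a : ℚ) / (b : ℚ) := by
    rw [← Rat.num_div_den ρ, hanum]
  have hba : b ≤ a * (s-1) := by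
    have hbq : (0:ℚ) < (b:ℚ) := by exact_mod_cast hbpos
    have h1 : 1 / ((s:ℚ) - 1) ≤ (a:ℚ)/(b:ℚ) := by rw [← hρab]; exact hρ
    have h2 : (1:ℚ) * (b:ℚ) ≤ (a:ℚ) * ((s:ℚ) - 1) := by
      rw [div_le_div_iff₀ (by linarith) hbq] at h1
      linarith
    have h3 : ((s:ℚ) - 1) = ((s - 1 : ℕ) : ℚ) := by
      have : (1:ℕ) ≤ s := by omega
      push_cast [Nat.cast_sub this]
      ring
    rw [h3, one_mul] at h2
    exact_mod_cast h2
  set k := 2*(s-1)*(a+2) + 1 with hkdef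
  have hkpos : 0 < k := by positivity
  set m := a * k with hmdef
  set n := b * k with hndef
  have hm : 0 < m := Nat.mul_pos hapos hkpos
  have hn : 0 < n := Nat.mul_pos hbpos hkpos
  have hnm : n ≤ (s-1) * m := by
    calc n = b * k := rfl
      _ ≤ (a * (s-1)) * k := Nat.mul_le_mul_right _ hba
      _ = (s-1) * (a * k) := by ring
  have hdiv : m / n = a / b := Nat.mul_div_mul_right a b hkpos
  have hbig : 2*(s-1)*(m/n + 1) < n := by
    rw [hdiv]
    have h1 : a / b ≤ a := Nat.div_le_self _ _
    have h2 : 2*(s-1)*(a/b + 1) ≤ 2*(s-1)*(a+2) := by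
      apply Nat.mul_le_mul_left
      omega
    have h3 : k ≤ b * k := by
      calc k = 1 * k := (one_mul _).symm
        _ ≤ b * k := Nat.mul_le_mul_right _ hbpos
    omega
  refine ⟨Necklace.graph s m n hs hm hn hbig, Necklace.graph_balanced hs hm hn hnm hbig, ?_⟩
  unfold SHypergraph.density
  rw [Necklace.graph_E_card hs hm hn hbig]
  show ((m:ℕ) : ℚ) / ((Finset.range n).card : ℚ) = ρ
  have hkq : ((k:ℕ):ℚ) ≠ 0 := by exact_mod_cast hkpos.ne'
  rw [Finset.card_range, hρab, hmdef, hndef, Nat.cast_mul, Nat.cast_mul,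
    mul_div_mul_right _ _ hkq]
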